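/- Let P₁,…,P_k be homogeneous holomorphic polynomials on ℂⁿ all of the same degree, set Q(z) := ∑_{l=1}^k P_l(z)·conj(P_l(z)), and let λ = (λ₁,…,λₙ) ∈ ℝⁿ. If ∑_{j=1}^n λ_j ( z_j·∂Q/∂z_j(z) + z̄_j·∂Q/∂z̄_j(z) ) = 0 for all z ∈ ℂⁿ, then ∑_{j=1}^n λ_j·z_j·∂P_l/∂z_j(z) = 0 for all z ∈ ℂⁿ and every l = 1,…,k; consequently ∑_{j=1}^n λ_j·z_j·∂Q/∂z_j(z) = 0 identically. -/

import Mathlib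

open MvPolynomial

noncomputable section

/-! ### Auxiliary lemmas -/

private def rePart {σ : Type*} (p : MvPolynomial σ ℂ) : MvPolynomial σ ℝ :=
  ∑ d ∈ p.support, monomial d ((p.coeff d).re)

private def imPart {σ : Type*} (p : MvPolynomial σ ℂ) : MvPolynomial σ ℝ :=
  ∑ d ∈ p.support, monomial d ((p.coeff d).im)

private lemma decomp {σ : Type*} (p : MvPolynomial σ ℂ) :
    p = map (algebraMap ℝ ℂ) (rePart p) + C Complex.I * map (algebraMap ℝ ℂ) (imPart p) := by
  classical
  ext d
  simp only [coeff_add, coeff_C_mul, coeff_map, rePart, imPart, coeff_sum, coeff_monomial]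
  rw [Finset.sum_ite_eq' , Finset.sum_ite_eq']
  by_cases hd : d ∈ p.support
  · simp [hd, Complex.ext_iff]
  · simp only [hd, if_false]
    rw [notMem_support_iff] at hd
    simp [hd]

private lemma eval_real_decomp {σ : Type*} (p : MvPolynomial σ ℂ) (x : σ → ℝ) :
    eval (fun i => (x i : ℂ)) p
      = ((eval x (rePart p) : ℝ) : ℂ) + Complex.I * ((eval x (imPart p) : ℝ) : ℂ) := by
  conv_lhs => rw [decomp p]
  have hmap : ∀ q : MvPolynomial σ ℝ,
      eval (fun i => (x i : ℂ)) (map (algebraMap ℝ ℂ) q) = ((eval x q : ℝ) : ℂ) := by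
    intro q
    rw [eval_map]
    have := eval₂_comp_left (algebraMap ℝ ℂ) (RingHom.id ℝ) x q
    simp only [RingHom.comp_id] at this
    rw [show (fun i => ((x i : ℂ))) = (⇑(algebraMap ℝ ℂ) ∘ x) from rfl, ← this]
    rfl
  simp [hmap]

private lemma vanish_on_reals {σ : Type*} (p : MvPolynomial σ ℂ)
    (h : ∀ x : σ → ℝ, eval (fun i => (x i : ℂ)) p = 0) : p = 0 := by
  have hre : rePart p = 0 := by
    apply MvPolynomial.funext
    intro x
    have := h x
    rw [eval_real_decomp] at this
    have := congrArg Complex.re this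
    simpa using this
  have him : imPart p = 0 := by
    apply MvPolynomial.funext
    intro x
    have := h x
    rw [eval_real_decomp] at this
    have := congrArg Complex.im this
    simpa using this
  rw [decomp p, hre, him]
  simp

private lemma conj_diag_vanish {n : ℕ} (F : MvPolynomial (Fin n ⊕ Fin n) ℂ)
    (h : ∀ z : Fin n → ℂ,
      eval (Sum.elim z (fun j => (starRingEnd ℂ) (z j))) F = 0) : F = 0 := by
  classical
  set u : Fin n ⊕ Fin n → MvPolynomial (Fin n ⊕ Fin n) ℂ :=
    Sum.elim (fun j => X (Sum.inl j) + C Complex.I * X (Sum.inr j))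
      (fun j => X (Sum.inl j) - C Complex.I * X (Sum.inr j)) with hu
  set u' : Fin n ⊕ Fin n → MvPolynomial (Fin n ⊕ Fin n) ℂ :=
    Sum.elim (fun j => C (1/2 : ℂ) * (X (Sum.inl j) + X (Sum.inr j)))
      (fun j => C (-Complex.I/2) * (X (Sum.inl j) - X (Sum.inr j))) with hu'
  have hH : bind₁ u F = 0 := by
    apply vanish_on_reals
    intro x
    have : eval (fun i => (x i : ℂ)) (bind₁ u F)
        = aeval (fun i => aeval (fun i => (x i : ℂ)) (u i)) F := by
      rw [← aeval_bind₁]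
      rfl
    rw [this]
    have hvec : (fun i => aeval (fun i => ((x i : ℂ))) (u i))
        = Sum.elim (fun j => (x (Sum.inl j) : ℂ) + Complex.I * x (Sum.inr j))
            (fun j => (starRingEnd ℂ) ((x (Sum.inl j) : ℂ) + Complex.I * x (Sum.inr j))) := by
      funext i
      cases i with
      | inl j => simp [hu]
      | inr j =>
          simp [hu, map_add, Complex.conj_ofReal]
          ring
    rw [hvec]
    have := h (fun j => (x (Sum.inl j) : ℂ) + Complex.I * x (Sum.inr j))
    rw [← this]
    rfl
  have hid : ∀ i, bind₁ u' (u i) = X i := by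
    intro i
    cases i with
    | inl j =>
        simp only [hu, hu', Sum.elim_inl, Sum.elim_inr, map_add, map_sub, map_mul, bind₁_X_right,
          bind₁_C_right]
        rw [← mul_assoc, ← C_mul, show Complex.I * (-Complex.I/2) = 1/2 by
          linear_combination (-1/2 : ℂ) * Complex.I_mul_I]
        have h2 : (C (1/2 : ℂ) : MvPolynomial (Fin n ⊕ Fin n) ℂ) * 2 = 1 := by
          rw [← C_1, ← map_ofNat (C : ℂ →+* MvPolynomial (Fin n ⊕ Fin n) ℂ) 2, ← C_mul]
          norm_num
        linear_combination X (Sum.inl j) * h2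
    | inr j =>
        simp only [hu, hu', Sum.elim_inl, Sum.elim_inr, map_add, map_sub, map_mul, bind₁_X_right,
          bind₁_C_right]
        rw [← mul_assoc, ← C_mul, show Complex.I * (-Complex.I/2) = 1/2 by
          linear_combination (-1/2 : ℂ) * Complex.I_mul_I]
        have h2 : (C (1/2 : ℂ) : MvPolynomial (Fin n ⊕ Fin n) ℂ) * 2 = 1 := by
          rw [← C_1, ← map_ofNat (C : ℂ →+* MvPolynomial (Fin n ⊕ Fin n) ℂ) 2, ← C_mul]
          norm_num
        linear_combination X (Sum.inr j) * h2
  have : F = bind₁ u' (bind₁ u F) := by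
    rw [bind₁_bind₁]
    have : (fun i => bind₁ u' (u i)) = (X : Fin n ⊕ Fin n → _) := funext hid
    rw [this, bind₁_X_left]
    rfl
  rw [this, hH, map_zero]

private lemma stoi_inl {n : ℕ} (p : MvPolynomial (Fin n) ℂ) :
    sumToIter ℂ (Fin n) (Fin n) (rename Sum.inl p) = map C p := by
  induction p using MvPolynomial.induction_on with
  | C a => simp [sumToIter_C]
  | add p q hp hq => simp [hp, hq]
  | mul_X p i hp => simp [hp, sumToIter_Xl]

private lemma stoi_inr {n : ℕ} (q : MvPolynomial (Fin n) ℂ) :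
    sumToIter ℂ (Fin n) (Fin n) (rename Sum.inr q) = C q := by
  induction q using MvPolynomial.induction_on with
  | C a => simp [sumToIter_C]
  | add p q hp hq => simp [hp, hq]
  | mul_X p i hp => simp [hp, sumToIter_Xr]

private lemma coeff_diag {n : ℕ} (d : Fin n →₀ ℕ) (p q : MvPolynomial (Fin n) ℂ) :
    coeff d (coeff d (sumToIter ℂ (Fin n) (Fin n)
        (rename Sum.inl p * rename Sum.inr q))) = coeff d p * coeff d q := by
  rw [map_mul, stoi_inl, stoi_inr]
  rw [show ((map (C : ℂ →+* MvPolynomial (Fin n) ℂ)) p * C q) = C q * (map C p) from mul_comm _ _]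
  rw [coeff_C_mul, coeff_map, mul_comm q (C (coeff d p)), coeff_C_mul, mul_comm]

private lemma coeff_X_pderiv {n : ℕ} (j : Fin n) (d : Fin n →₀ ℕ) (p : MvPolynomial (Fin n) ℂ) :
    coeff d (X j * pderiv j p) = (d j : ℂ) * coeff d p := by
  induction p using MvPolynomial.induction_on' with
  | add p q hp hq => simp [mul_add, hp, hq, mul_add]
  | monomial s a =>
      rw [pderiv_monomial]
      rw [show (X j : MvPolynomial (Fin n) ℂ) = monomial (Finsupp.single j 1) 1 from rfl,
        monomial_mul, one_mul]
      by_cases hs : s j = 0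
      · simp only [hs, Nat.cast_zero, mul_zero, map_zero, coeff_zero, coeff_monomial]
        by_cases hsd : s = d
        · subst hsd; simp [hs]
        · simp [hsd]
      · have hle : Finsupp.single j 1 + (s - Finsupp.single j 1) = s := by
          ext i
          rcases eq_or_ne i j with rfl | hij
          · simp only [Finsupp.add_apply, Finsupp.tsub_apply, Finsupp.single_eq_same]
            omega
          · simp [Finsupp.single_eq_of_ne hij]
        rw [hle, coeff_monomial, coeff_monomial]
        by_cases hsd : s = d
        · subst hsd; simp [mul_comm]
        · simp [hsd]

private def eulerOp {n : ℕ} (lam : Fin n → ℝ) (p : MvPolynomial (Fin n) ℂ) :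
    MvPolynomial (Fin n) ℂ :=
  ∑ j, C (lam j : ℂ) * (X j * pderiv j p)

private lemma conj_eval {n : ℕ} (z : Fin n → ℂ) (p : MvPolynomial (Fin n) ℂ) :
    eval (fun j => (starRingEnd ℂ) (z j)) (map (starRingEnd ℂ) p)
      = (starRingEnd ℂ) (eval z p) := by
  rw [eval_map]
  have := eval₂_comp_left (starRingEnd ℂ) (RingHom.id ℂ) z p
  simp only [RingHom.comp_id] at this
  rw [show (fun j => (starRingEnd ℂ) (z j)) = (⇑(starRingEnd ℂ) ∘ z) from rfl, ← this]
  rfl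

private lemma coeff_eulerOp {n : ℕ} (lam : Fin n → ℝ) (d : Fin n →₀ ℕ)
    (p : MvPolynomial (Fin n) ℂ) :
    coeff d (eulerOp lam p) = (∑ j, (lam j : ℂ) * (d j : ℕ)) * coeff d p := by
  simp only [eulerOp, coeff_sum, coeff_C_mul, coeff_X_pderiv, Finset.sum_mul]
  exact Finset.sum_congr rfl fun j _ => by ring

private lemma eval_eulerOp {n : ℕ} (lam : Fin n → ℝ) (z : Fin n → ℂ)
    (p : MvPolynomial (Fin n) ℂ) :
    eval z (eulerOp lam p) = ∑ j, (lam j : ℂ) * z j * eval z (pderiv j p) := by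
  simp [eulerOp, mul_assoc]

/-- if `∑_j λ_j (z_j ∂Q/∂z_j + z̄_j ∂Q/∂z̄_j) = 0` for the sum of squares
`Q = ∑_l P_l · conj P_l` (with `P_l` homogeneous of the same degree) and `λ ∈ ℝⁿ`, then
`∑_j λ_j z_j ∂P_l/∂z_j = 0` for every `l`, and consequently `∑_j λ_j z_j ∂Q/∂z_j = 0`. -/
theorem real_diagonal_rotation_annihilates_squares {n k m : ℕ}
    (P : Fin k → MvPolynomial (Fin n) ℂ)
    (hP : ∀ l, (P l).IsHomogeneous m)
    (lam : Fin n → ℝ)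
    (h : ∀ z : Fin n → ℂ,
      ∑ j, (lam j : ℂ) *
        (z j * (∑ l, eval z (pderiv j (P l)) * (starRingEnd ℂ) (eval z (P l)))
          + (starRingEnd ℂ) (z j) *
            (∑ l, eval z (P l) * (starRingEnd ℂ) (eval z (pderiv j (P l))))) = 0) :
    (∀ l, ∀ z : Fin n → ℂ, ∑ j, (lam j : ℂ) * z j * eval z (pderiv j (P l)) = 0) ∧
      (∀ z : Fin n → ℂ, ∑ j, (lam j : ℂ) * z j *
        (∑ l, eval z (pderiv j (P l)) * (starRingEnd ℂ) (eval z (P l))) = 0) := by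
  classical
  set cc := starRingEnd ℂ with hcc
  set G : MvPolynomial (Fin n ⊕ Fin n) ℂ :=
    ∑ l, (rename Sum.inl (eulerOp lam (P l)) * rename Sum.inr (map cc (P l))
      + rename Sum.inl (P l) * rename Sum.inr (map cc (eulerOp lam (P l)))) with hG
  -- Step 1: G vanishes on the conjugate diagonal
  have evG0 : ∀ z : Fin n → ℂ, eval (Sum.elim z (fun j => cc (z j))) G = 0 := by
    intro z
    have hz := h z
    have e1 : eval (Sum.elim z (fun j => cc (z j))) G
        = ∑ l, (eval z (eulerOp lam (P l)) * cc (eval z (P l))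
            + eval z (P l) * cc (eval z (eulerOp lam (P l)))) := by
      rw [hG, map_sum]
      refine Finset.sum_congr rfl fun l _ => ?_
      rw [map_add, map_mul, map_mul, eval_rename, eval_rename, eval_rename, eval_rename,
        Sum.elim_comp_inl, Sum.elim_comp_inr, hcc, conj_eval, conj_eval]
    rw [e1, ← hz]
    have lhs_eq : ∑ l, (eval z (eulerOp lam (P l)) * cc (eval z (P l))
        + eval z (P l) * cc (eval z (eulerOp lam (P l))))
        = ∑ l, ∑ j, ((lam j : ℂ) * z j * eval z (pderiv j (P l)) * cc (eval z (P l))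
            + (lam j : ℂ) * cc (z j) * (eval z (P l) * cc (eval z (pderiv j (P l))))) := by
      refine Finset.sum_congr rfl fun l _ => ?_
      rw [eval_eulerOp, map_sum cc, Finset.sum_mul, Finset.mul_sum, ← Finset.sum_add_distrib]
      refine Finset.sum_congr rfl fun j _ => ?_
      rw [map_mul, map_mul, hcc, Complex.conj_ofReal]
      ring
    have rhs_eq : ∑ j, (lam j : ℂ) *
        (z j * (∑ l, eval z (pderiv j (P l)) * cc (eval z (P l)))
          + cc (z j) * (∑ l, eval z (P l) * cc (eval z (pderiv j (P l)))))
        = ∑ j, ∑ l, ((lam j : ℂ) * z j * eval z (pderiv j (P l)) * cc (eval z (P l))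
            + (lam j : ℂ) * cc (z j) * (eval z (P l) * cc (eval z (pderiv j (P l))))) := by
      refine Finset.sum_congr rfl fun j _ => ?_
      rw [mul_add, Finset.mul_sum, Finset.mul_sum, Finset.mul_sum, Finset.mul_sum,
        ← Finset.sum_add_distrib]
      refine Finset.sum_congr rfl fun l _ => ?_
      ring
    rw [lhs_eq, rhs_eq, Finset.sum_comm]
  -- Step 2: G = 0 as a polynomial
  have hG0 : G = 0 := conj_diag_vanish G evG0
  -- Step 3: coefficient extraction
  have hkey : ∀ (d : Fin n →₀ ℕ) (l : Fin k),
      (∑ j, (lam j : ℂ) * (d j : ℕ)) * coeff d (P l) = 0 := by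
    intro d l
    set w : ℂ := ∑ j, (lam j : ℂ) * (d j : ℕ) with hw
    have hwreal : w = ((∑ j, lam j * (d j : ℕ) : ℝ) : ℂ) := by push_cast [hw]; ring
    have hccw : cc w = w := by rw [hwreal, hcc]; exact Complex.conj_ofReal _
    have h0 : coeff d (coeff d (sumToIter ℂ (Fin n) (Fin n) G)) = 0 := by
      rw [hG0]; simp
    have hsum : coeff d (coeff d (sumToIter ℂ (Fin n) (Fin n) G))
        = ∑ i, (2 * w * ((Complex.normSq (coeff d (P i)) : ℝ) : ℂ)) := by
      rw [hG]
      rw [map_sum (sumToIter ℂ (Fin n) (Fin n)), coeff_sum, coeff_sum]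
      refine Finset.sum_congr rfl fun i _ => ?_
      rw [map_add, coeff_add, coeff_add, coeff_diag, coeff_diag, coeff_eulerOp, coeff_map,
        coeff_map, coeff_eulerOp, ← hw]
      have hm : coeff d (P i) * cc (coeff d (P i))
          = ((Complex.normSq (coeff d (P i)) : ℝ) : ℂ) := by
        rw [hcc]; exact Complex.mul_conj _
      rw [map_mul, hccw]
      linear_combination (2 * w : ℂ) * hm
    rw [hsum, ← Finset.mul_sum] at h0
    by_cases hw0 : w = 0
    · rw [hw0, zero_mul]
    · have hS : (∑ i, ((Complex.normSq (coeff d (P i)) : ℝ) : ℂ)) = 0 := by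
        rcases mul_eq_zero.mp h0 with h1 | h2
        · rcases mul_eq_zero.mp h1 with h3 | h4
          · norm_num at h3
          · exact absurd h4 hw0
        · exact h2
      rw [← Complex.ofReal_sum, Complex.ofReal_eq_zero] at hS
      have hnorm : Complex.normSq (coeff d (P l)) = 0 :=
        (Finset.sum_eq_zero_iff_of_nonneg
          (fun i _ => Complex.normSq_nonneg (coeff d (P i)))).mp hS l (Finset.mem_univ l)
      rw [Complex.normSq_eq_zero.mp hnorm, mul_zero]
  have hTop : ∀ l, eulerOp lam (P l) = 0 := by
    intro l
    ext d
    rw [coeff_eulerOp, coeff_zero]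
    exact hkey d l
  have goal1 : ∀ l, ∀ z : Fin n → ℂ,
      ∑ j, (lam j : ℂ) * z j * eval z (pderiv j (P l)) = 0 := by
    intro l z
    rw [← eval_eulerOp, hTop l, map_zero]
  refine ⟨goal1, fun z => ?_⟩
  have hsw : ∀ j : Fin n, (lam j : ℂ) * z j *
      (∑ l, eval z (pderiv j (P l)) * cc (eval z (P l)))
      = ∑ l, (lam j : ℂ) * z j * eval z (pderiv j (P l)) * cc (eval z (P l)) := by
    intro j
    rw [Finset.mul_sum]
    exact Finset.sum_congr rfl fun l _ => by ring
  rw [Finset.sum_congr rfl fun j _ => hsw j, Finset.sum_comm]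
  refine Finset.sum_eq_zero fun l _ => ?_
  rw [← Finset.sum_mul, goal1 l z, zero_mul]
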